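/- For every y > 0 one has θ y (e^{θ y} + e^{−θ y}) − (e^{θ y} − e^{−θ y}) > 0; moreover ξ is differentiable on (0,∞) with ξ′(y) = (2 k₂/θ) · ((e^{θ y} + e^{−θ y} − 2)/(e^{θ y} − e^{−θ y})²) · (θ y (e^{θ y} + e^{−θ y}) − (e^{θ y} − e^{−θ y})) > 0, so that ξ is strictly increasing on (0,∞). -/

import Mathlib

/-- `ξ(y) = k₂ y² − (2k₂/θ) ((e^{θy}+e^{−θy}−2)/(e^{θy}−e^{−θy})) y`. -/
noncomputable def xiFun (θ k₂ y : ℝ) : ℝ :=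
  k₂ * y ^ 2 -
    (2 * k₂ / θ) *
      ((Real.exp (θ * y) + Real.exp (-(θ * y)) - 2) /
        (Real.exp (θ * y) - Real.exp (-(θ * y)))) * y

lemma key_pos (t : ℝ) (ht : 0 < t) :
    0 < t * (Real.exp t + Real.exp (-t)) - (Real.exp t - Real.exp (-t)) := by
  set g : ℝ → ℝ := fun x => x * (Real.exp x + Real.exp (-x)) - (Real.exp x - Real.exp (-x)) with hg
  have hder : ∀ x : ℝ, HasDerivAt g (x * (Real.exp x - Real.exp (-x))) x := by
    intro x
    have hE := Real.hasDerivAt_exp x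
    have hF : HasDerivAt (fun x : ℝ => Real.exp (-x)) (-Real.exp (-x)) x := by
      simpa using (hasDerivAt_neg x).exp
    have h := ((hasDerivAt_id x).mul (hE.add hF)).sub (hE.sub hF)
    refine h.congr_deriv ?_
    simp only [id_eq, Pi.add_apply]
    ring
  have hmono : StrictMonoOn g (Set.Ici 0) := by
    apply strictMonoOn_of_deriv_pos (convex_Ici 0)
    · exact fun x _ => (hder x).continuousAt.continuousWithinAt
    · intro x hx
      rw [interior_Ici] at hx
      rw [(hder x).deriv]
      have h1 : Real.exp (-x) < Real.exp x := Real.exp_lt_exp.2 (by linarith [hx.out])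
      exact mul_pos hx (sub_pos.2 h1)
  have h0 : g 0 = 0 := by simp [hg]
  have := hmono Set.self_mem_Ici (Set.mem_Ici.2 ht.le) ht
  rw [h0] at this
  exact this

lemma deriv_xi (θ k₂ : ℝ) (hθ : 0 < θ) (y : ℝ) (hy : 0 < y) :
    HasDerivAt (xiFun θ k₂)
        ((2 * k₂ / θ) *
          ((Real.exp (θ * y) + Real.exp (-(θ * y)) - 2) /
            (Real.exp (θ * y) - Real.exp (-(θ * y))) ^ 2) *
          (θ * y * (Real.exp (θ * y) + Real.exp (-(θ * y))) -
            (Real.exp (θ * y) - Real.exp (-(θ * y))))) y := by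
  have ht : 0 < θ * y := mul_pos hθ hy
  have hE1 : 1 < Real.exp (θ * y) := by simpa using Real.exp_lt_exp.2 ht
  have hF1 : Real.exp (-(θ * y)) < 1 := by
    rw [Real.exp_lt_one_iff]; linarith
  have hv : Real.exp (θ * y) - Real.exp (-(θ * y)) ≠ 0 := by
    have : Real.exp (-(θ * y)) < Real.exp (θ * y) := by linarith
    linarith
  have h1 : HasDerivAt (fun y : ℝ => θ * y) θ y := by
    simpa using (hasDerivAt_id y).const_mul θ
  have hE : HasDerivAt (fun y : ℝ => Real.exp (θ * y)) (Real.exp (θ * y) * θ) y := h1.exp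
  have hF : HasDerivAt (fun y : ℝ => Real.exp (-(θ * y))) (Real.exp (-(θ * y)) * (-θ)) y :=
    h1.neg.exp
  have hu := (hE.add hF).sub_const 2
  have hvv := hE.sub hF
  have hf := hu.div hvv hv
  have hterm := (hf.const_mul (2 * k₂ / θ)).mul (hasDerivAt_id y)
  have hsq : HasDerivAt (fun y : ℝ => k₂ * y ^ 2) (k₂ * (2 * y)) y := by
    simpa using (hasDerivAt_pow 2 y).const_mul k₂
  have hxi := hsq.sub hterm
  have hfun : xiFun θ k₂ = fun y => k₂ * y ^ 2 -
      (2 * k₂ / θ) *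
        ((Real.exp (θ * y) + Real.exp (-(θ * y)) - 2) /
          (Real.exp (θ * y) - Real.exp (-(θ * y)))) * y := rfl
  rw [hfun]
  refine hxi.congr_deriv ?_
  simp only [Pi.add_apply, Pi.sub_apply, Pi.div_apply, id_eq]
  have hEne : Real.exp (θ * y) ≠ 0 := Real.exp_ne_zero _
  have hFeq : Real.exp (-(θ * y)) = (Real.exp (θ * y))⁻¹ := by
    rw [Real.exp_neg]
  have h2 : Real.exp (θ * y) ^ 2 - 1 ≠ 0 := by nlinarith
  rw [hFeq]
  rw [show Real.exp (θ * y) - (Real.exp (θ * y))⁻¹ =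
      (Real.exp (θ * y) ^ 2 - 1) / Real.exp (θ * y) by field_simp]
  have h2' : Real.exp (y * θ) ^ 2 - 1 ≠ 0 := by rw [mul_comm]; exact h2
  field_simp [hθ.ne', h2, h2']
  ring

theorem stmt_7 (θ k₂ : ℝ) (hθ : 0 < θ) (hk : 0 < k₂) :
    (∀ y : ℝ, 0 < y →
      0 < θ * y * (Real.exp (θ * y) + Real.exp (-(θ * y))) -
          (Real.exp (θ * y) - Real.exp (-(θ * y))) ∧
      HasDerivAt (xiFun θ k₂)
        ((2 * k₂ / θ) *
          ((Real.exp (θ * y) + Real.exp (-(θ * y)) - 2) /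
            (Real.exp (θ * y) - Real.exp (-(θ * y))) ^ 2) *
          (θ * y * (Real.exp (θ * y) + Real.exp (-(θ * y))) -
            (Real.exp (θ * y) - Real.exp (-(θ * y))))) y ∧
      0 < (2 * k₂ / θ) *
          ((Real.exp (θ * y) + Real.exp (-(θ * y)) - 2) /
            (Real.exp (θ * y) - Real.exp (-(θ * y))) ^ 2) *
          (θ * y * (Real.exp (θ * y) + Real.exp (-(θ * y))) -
            (Real.exp (θ * y) - Real.exp (-(θ * y))))) ∧
    StrictMonoOn (xiFun θ k₂) (Set.Ioi 0) := by
  have main : (∀ y : ℝ, 0 < y →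
      0 < θ * y * (Real.exp (θ * y) + Real.exp (-(θ * y))) -
          (Real.exp (θ * y) - Real.exp (-(θ * y))) ∧
      HasDerivAt (xiFun θ k₂)
        ((2 * k₂ / θ) *
          ((Real.exp (θ * y) + Real.exp (-(θ * y)) - 2) /
            (Real.exp (θ * y) - Real.exp (-(θ * y))) ^ 2) *
          (θ * y * (Real.exp (θ * y) + Real.exp (-(θ * y))) -
            (Real.exp (θ * y) - Real.exp (-(θ * y))))) y ∧
      0 < (2 * k₂ / θ) *
          ((Real.exp (θ * y) + Real.exp (-(θ * y)) - 2) /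
            (Real.exp (θ * y) - Real.exp (-(θ * y))) ^ 2) *
          (θ * y * (Real.exp (θ * y) + Real.exp (-(θ * y))) -
            (Real.exp (θ * y) - Real.exp (-(θ * y))))) := by
    intro y hy
    have ht : 0 < θ * y := mul_pos hθ hy
    have hkey := key_pos (θ * y) ht
    have hE1 : 1 < Real.exp (θ * y) := by simpa using Real.exp_lt_exp.2 ht
    have hEF : Real.exp (θ * y) * Real.exp (-(θ * y)) = 1 := by
      rw [← Real.exp_add]; simp
    have hsq1 : 0 < (Real.exp (θ * y) - 1) ^ 2 :=
      pow_pos (sub_pos.2 hE1) 2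
    have hu : 0 < Real.exp (θ * y) + Real.exp (-(θ * y)) - 2 := by
      nlinarith [Real.exp_pos (θ * y), hEF, hsq1]
    have hvpos : 0 < Real.exp (θ * y) - Real.exp (-(θ * y)) := by
      have : Real.exp (-(θ * y)) < Real.exp (θ * y) := Real.exp_lt_exp.2 (by linarith)
      linarith
    refine ⟨hkey, deriv_xi θ k₂ hθ y hy, ?_⟩
    have h1 : 0 < 2 * k₂ / θ := by positivity
    have h2 : 0 < (Real.exp (θ * y) + Real.exp (-(θ * y)) - 2) /
        (Real.exp (θ * y) - Real.exp (-(θ * y))) ^ 2 := div_pos hu (by positivity)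
    exact mul_pos (mul_pos h1 h2) hkey
  refine ⟨main, ?_⟩
  apply strictMonoOn_of_deriv_pos (convex_Ioi 0)
  · intro x hx
    exact ((main x hx).2.1.continuousAt).continuousWithinAt
  · intro x hx
    rw [interior_Ioi] at hx
    rw [(main x hx).2.1.deriv]
    exact (main x hx).2.2
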